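/- Let δ be a nonzero PPT state on ℂ²⊗ℂ²⊗ℂᴺ which is an edge state, let P, Q, R, S be positive semidefinite matrices with Range(P) = ker(δ), Range(Q) = ker(δ^{t_A}), Range(R) = ker(δ^{t_B}), Range(S) = ker(δ^{t_{AB}}), let ε := inf { ⟨e⊗f⊗g, (P + Q^{t_A} + R^{t_B} + S^{t_{AB}}) (e⊗f⊗g)⟩ : e, f ∈ ℂ², g ∈ ℂᴺ unit vectors }, and set W := P + Q^{t_A} + R^{t_B} + S^{t_{AB}} − ε·𝟙. Then (i) Tr(W σ) ≥ 0 for every separable state σ on ℂ²⊗ℂ²⊗ℂᴺ with Tr(σ) = 1, and (ii) Tr(W δ) = −ε · Tr(δ) < 0; hence W is an entanglement witness detecting the PPT entangled edge state δ. -/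

import Mathlib

open Matrix BigOperators ComplexOrder

noncomputable section

/-- Partial transpose with respect to Alice (the first `Fin 2` factor). -/
def ptA {N : ℕ} (ρ : Matrix (Fin 2 × Fin 2 × Fin N) (Fin 2 × Fin 2 × Fin N) ℂ) :
    Matrix (Fin 2 × Fin 2 × Fin N) (Fin 2 × Fin 2 × Fin N) ℂ :=
  fun x y => ρ (y.1, x.2.1, x.2.2) (x.1, y.2.1, y.2.2)

/-- Partial transpose with respect to Bob (the second `Fin 2` factor). -/
def ptB {N : ℕ} (ρ : Matrix (Fin 2 × Fin 2 × Fin N) (Fin 2 × Fin 2 × Fin N) ℂ) :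
    Matrix (Fin 2 × Fin 2 × Fin N) (Fin 2 × Fin 2 × Fin N) ℂ :=
  fun x y => ρ (x.1, y.2.1, x.2.2) (y.1, x.2.1, y.2.2)

/-- Partial transpose with respect to Alice and Bob. -/
def ptAB {N : ℕ} (ρ : Matrix (Fin 2 × Fin 2 × Fin N) (Fin 2 × Fin 2 × Fin N) ℂ) :
    Matrix (Fin 2 × Fin 2 × Fin N) (Fin 2 × Fin 2 × Fin N) ℂ :=
  ptB (ptA ρ)

/-- PPT: all partial transposes are positive semidefinite. -/
def IsPPT {N : ℕ} (ρ : Matrix (Fin 2 × Fin 2 × Fin N) (Fin 2 × Fin 2 × Fin N) ℂ) : Prop :=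
  (ptA ρ).PosSemidef ∧ (ptB ρ).PosSemidef ∧ (ptAB ρ).PosSemidef

/-- The product vector `e ⊗ f ⊗ g`. -/
def prodVec {N : ℕ} (e f : Fin 2 → ℂ) (g : Fin N → ℂ) : Fin 2 × Fin 2 × Fin N → ℂ :=
  fun x => e x.1 * f x.2.1 * g x.2.2

/-- The rank-one outer product `v v†`. -/
def outer {n : Type*} (v : n → ℂ) : Matrix n n ℂ := Matrix.vecMulVec v (star v)

/-- Full separability of a tripartite state. -/
def SeparableState {N : ℕ} (ρ : Matrix (Fin 2 × Fin 2 × Fin N) (Fin 2 × Fin 2 × Fin N) ℂ) : Prop :=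
  ∃ (k : ℕ) (p : Fin k → ℝ) (e f : Fin k → Fin 2 → ℂ) (g : Fin k → Fin N → ℂ),
    (∀ i, 0 ≤ p i) ∧
    ρ = ∑ i, (p i : ℂ) • outer (prodVec (e i) (f i) (g i))

/-- Reduced matrix of Alice. -/
def redA {N : ℕ} (ρ : Matrix (Fin 2 × Fin 2 × Fin N) (Fin 2 × Fin 2 × Fin N) ℂ) :
    Matrix (Fin 2) (Fin 2) ℂ :=
  fun a a' => ∑ b : Fin 2, ∑ c : Fin N, ρ (a, b, c) (a', b, c)

/-- Reduced matrix of Bob. -/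
def redB {N : ℕ} (ρ : Matrix (Fin 2 × Fin 2 × Fin N) (Fin 2 × Fin 2 × Fin N) ℂ) :
    Matrix (Fin 2) (Fin 2) ℂ :=
  fun b b' => ∑ a : Fin 2, ∑ c : Fin N, ρ (a, b, c) (a, b', c)

/-- Reduced matrix of Charlie. -/
def redC {N : ℕ} (ρ : Matrix (Fin 2 × Fin 2 × Fin N) (Fin 2 × Fin 2 × Fin N) ℂ) :
    Matrix (Fin N) (Fin N) ℂ :=
  fun c c' => ∑ a : Fin 2, ∑ b : Fin 2, ρ (a, b, c) (a, b, c')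

/-- `ρ` is supported on `ℂ² ⊗ ℂ² ⊗ ℂᴺ`: all single-party reduced matrices have full rank. -/
def SupportedOn {N : ℕ} (ρ : Matrix (Fin 2 × Fin 2 × Fin N) (Fin 2 × Fin 2 × Fin N) ℂ) : Prop :=
  (redA ρ).rank = 2 ∧ (redB ρ).rank = 2 ∧ (redC ρ).rank = N

/-- `v` is in the range of the matrix `M`. -/
def InRange {N : ℕ} (M : Matrix (Fin 2 × Fin 2 × Fin N) (Fin 2 × Fin 2 × Fin N) ℂ)
    (v : Fin 2 × Fin 2 × Fin N → ℂ) : Prop :=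
  ∃ w, M.mulVec w = v

/-- A PPT state `δ` is an edge state: no nonzero product vector `e⊗f⊗g` lies in the range
of `δ` with its partial conjugates in the ranges of the partial transposes. -/
def IsEdgeState {N : ℕ} (δ : Matrix (Fin 2 × Fin 2 × Fin N) (Fin 2 × Fin 2 × Fin N) ℂ) :
    Prop :=
  ¬ ∃ (e f : Fin 2 → ℂ) (g : Fin N → ℂ), e ≠ 0 ∧ f ≠ 0 ∧ g ≠ 0 ∧
    InRange δ (prodVec e f g) ∧
    InRange (ptA δ) (prodVec (star e) f g) ∧
    InRange (ptB δ) (prodVec e (star f) g) ∧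
    InRange (ptAB δ) (prodVec (star e) (star f) g)

/-- The set of values `⟨e⊗f⊗g, (P + Q^{t_A} + R^{t_B} + S^{t_{AB}}) e⊗f⊗g⟩` over unit
vectors `e`, `f`, `g`. -/
def epsSet {N : ℕ} (P Q R S : Matrix (Fin 2 × Fin 2 × Fin N) (Fin 2 × Fin 2 × Fin N) ℂ) :
    Set ℝ :=
  {r : ℝ | ∃ (e f : Fin 2 → ℂ) (g : Fin N → ℂ),
    star e ⬝ᵥ e = 1 ∧ star f ⬝ᵥ f = 1 ∧ star g ⬝ᵥ g = 1 ∧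
    (r : ℂ) = star (prodVec e f g) ⬝ᵥ
      (P + ptA Q + ptB R + ptAB S).mulVec (prodVec e f g)}

namespace EW

abbrev Idx (N : ℕ) := Fin 2 × Fin 2 × Fin N

variable {N : ℕ}

def swapA : (Idx N × Idx N) ≃ (Idx N × Idx N) where
  toFun p := ((p.2.1, p.1.2.1, p.1.2.2), (p.1.1, p.2.2.1, p.2.2.2))
  invFun p := ((p.2.1, p.1.2.1, p.1.2.2), (p.1.1, p.2.2.1, p.2.2.2))
  left_inv p := rfl
  right_inv p := rfl

def swapB : (Idx N × Idx N) ≃ (Idx N × Idx N) where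
  toFun p := ((p.1.1, p.2.2.1, p.1.2.2), (p.2.1, p.1.2.1, p.2.2.2))
  invFun p := ((p.1.1, p.2.2.1, p.1.2.2), (p.2.1, p.1.2.1, p.2.2.2))
  left_inv p := rfl
  right_inv p := rfl

lemma trace_mul_eq {n : Type*} [Fintype n] (A B : Matrix n n ℂ) :
    (A * B).trace = ∑ p : n × n, A p.1 p.2 * B p.2 p.1 := by
  rw [Fintype.sum_prod_type]
  simp [Matrix.trace, Matrix.mul_apply, Matrix.diag]

lemma quad_eq {n : Type*} [Fintype n] (M : Matrix n n ℂ) (v : n → ℂ) :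
    star v ⬝ᵥ M.mulVec v = ∑ p : n × n, star (v p.1) * M p.1 p.2 * v p.2 := by
  rw [Fintype.sum_prod_type]
  simp [dotProduct, Matrix.mulVec, Finset.mul_sum, mul_assoc]

lemma trace_ptA_mul (Q δ : Matrix (Idx N) (Idx N) ℂ) :
    (ptA Q * δ).trace = (Q * ptA δ).trace := by
  rw [trace_mul_eq, trace_mul_eq,
    ← Equiv.sum_comp (swapA (N := N)) (fun p => Q p.1 p.2 * ptA δ p.2 p.1)]
  rfl

lemma trace_ptB_mul (R δ : Matrix (Idx N) (Idx N) ℂ) :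
    (ptB R * δ).trace = (R * ptB δ).trace := by
  rw [trace_mul_eq, trace_mul_eq,
    ← Equiv.sum_comp (swapB (N := N)) (fun p => R p.1 p.2 * ptB δ p.2 p.1)]
  rfl

lemma ptA_ptB (δ : Matrix (Idx N) (Idx N) ℂ) : ptA (ptB δ) = ptAB δ := rfl

lemma trace_ptAB_mul (S δ : Matrix (Idx N) (Idx N) ℂ) :
    (ptAB S * δ).trace = (S * ptAB δ).trace := by
  show (ptB (ptA S) * δ).trace = _
  rw [trace_ptB_mul, trace_ptA_mul, ptA_ptB]

lemma quad_ptA (M : Matrix (Idx N) (Idx N) ℂ) (e f : Fin 2 → ℂ) (g : Fin N → ℂ) :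
    star (prodVec e f g) ⬝ᵥ (ptA M).mulVec (prodVec e f g)
      = star (prodVec (star e) f g) ⬝ᵥ M.mulVec (prodVec (star e) f g) := by
  rw [quad_eq, quad_eq,
    ← Equiv.sum_comp (swapA (N := N))
      (fun p => star ((prodVec (star e) f g) p.1) * M p.1 p.2 * (prodVec (star e) f g) p.2)]
  refine Fintype.sum_congr _ _ fun p => ?_
  simp only [swapA, Equiv.coe_fn_mk, prodVec, ptA, Pi.star_apply, star_mul', star_star]
  ring

lemma quad_ptB (M : Matrix (Idx N) (Idx N) ℂ) (e f : Fin 2 → ℂ) (g : Fin N → ℂ) :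
    star (prodVec e f g) ⬝ᵥ (ptB M).mulVec (prodVec e f g)
      = star (prodVec e (star f) g) ⬝ᵥ M.mulVec (prodVec e (star f) g) := by
  rw [quad_eq, quad_eq,
    ← Equiv.sum_comp (swapB (N := N))
      (fun p => star ((prodVec e (star f) g) p.1) * M p.1 p.2 * (prodVec e (star f) g) p.2)]
  refine Fintype.sum_congr _ _ fun p => ?_
  simp only [swapB, Equiv.coe_fn_mk, prodVec, ptB, Pi.star_apply, star_mul', star_star]
  ring

lemma quad_ptAB (M : Matrix (Idx N) (Idx N) ℂ) (e f : Fin 2 → ℂ) (g : Fin N → ℂ) :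
    star (prodVec e f g) ⬝ᵥ (ptAB M).mulVec (prodVec e f g)
      = star (prodVec (star e) (star f) g) ⬝ᵥ M.mulVec (prodVec (star e) (star f) g) := by
  show star (prodVec e f g) ⬝ᵥ (ptB (ptA M)).mulVec (prodVec e f g) = _
  rw [quad_ptB, quad_ptA]

lemma dot_prodVec (e f e' f' : Fin 2 → ℂ) (g g' : Fin N → ℂ) :
    star (prodVec e f g) ⬝ᵥ prodVec e' f' g'
      = (star e ⬝ᵥ e') * (star f ⬝ᵥ f') * (star g ⬝ᵥ g') := by
  simp only [dotProduct, Pi.star_apply, prodVec, star_mul']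
  rw [Finset.sum_mul_sum, Finset.sum_mul_sum]
  rw [Fintype.sum_prod_type]
  refine Finset.sum_congr rfl fun a _ => ?_
  rw [Fintype.sum_prod_type, Finset.sum_comm]
  refine Finset.sum_congr rfl fun c _ => ?_
  rw [Finset.sum_mul]
  refine Finset.sum_congr rfl fun b _ => ?_
  ring


lemma isHermitian_ptA {M : Matrix (Idx N) (Idx N) ℂ} (h : M.IsHermitian) :
    (ptA M).IsHermitian := by
  ext x y
  simp only [conjTranspose_apply, ptA]
  exact h.apply _ _

lemma isHermitian_ptB {M : Matrix (Idx N) (Idx N) ℂ} (h : M.IsHermitian) :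
    (ptB M).IsHermitian := by
  ext x y
  simp only [conjTranspose_apply, ptB]
  exact h.apply _ _

lemma isHermitian_ptAB {M : Matrix (Idx N) (Idx N) ℂ} (h : M.IsHermitian) :
    (ptAB M).IsHermitian := isHermitian_ptB (isHermitian_ptA h)

/-- If `range P = ker M` for Hermitian `M`, `P`, and `P v = 0`, then `v ∈ range M`. -/
lemma mem_range_of_herm {n : Type*} [Fintype n] [DecidableEq n]
    (M P : Matrix n n ℂ) (hM : M.IsHermitian) (hP : P.IsHermitian)
    (hPr : LinearMap.range P.mulVecLin = LinearMap.ker M.mulVecLin)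
    (v : n → ℂ) (hv : P.mulVec v = 0) : ∃ w, M.mulVec w = v := by
  have hdis : Disjoint (LinearMap.ker M.mulVecLin) (LinearMap.range M.mulVecLin) := by
    rw [Submodule.disjoint_def]
    rintro x hx ⟨w, rfl⟩
    have h0 : star (M.mulVecLin w) ⬝ᵥ (M.mulVecLin w) = 0 := by
      show star (M *ᵥ w) ⬝ᵥ (M *ᵥ w) = 0
      rw [star_mulVec, ← dotProduct_mulVec, hM.eq]
      have hx2 : M *ᵥ (M *ᵥ w) = 0 := hx
      rw [hx2, dotProduct_zero]
    exact dotProduct_star_self_eq_zero.mp h0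
  have htop : LinearMap.ker M.mulVecLin ⊔ LinearMap.range M.mulVecLin = ⊤ := by
    apply Submodule.eq_top_of_disjoint
    · rw [add_comm]
      exact (LinearMap.finrank_range_add_finrank_ker M.mulVecLin).ge
    · exact hdis
  have hvmem : v ∈ LinearMap.ker M.mulVecLin ⊔ LinearMap.range M.mulVecLin := by
    rw [htop]; trivial
  obtain ⟨k, hk, r, hr, hkr⟩ := Submodule.mem_sup.mp hvmem
  obtain ⟨w, hw⟩ := hr
  obtain ⟨u, hu⟩ : k ∈ LinearMap.range P.mulVecLin := hPr ▸ hk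
  have hkv : star k ⬝ᵥ v = 0 := by
    rw [← hu]
    show star (P.mulVec u) ⬝ᵥ v = 0
    rw [star_mulVec, ← dotProduct_mulVec, hP.eq, hv, dotProduct_zero]
  have hkr0 : star k ⬝ᵥ r = 0 := by
    rw [← hw]
    show star k ⬝ᵥ M.mulVec w = 0
    rw [dotProduct_mulVec, ← hM.eq, ← star_mulVec]
    have : M.mulVec k = 0 := hk
    rw [this]
    simp
  have hk0 : k = 0 := by
    apply dotProduct_star_self_eq_zero.mp
    have := hkv
    rw [← hkr, dotProduct_add, hkr0, add_zero] at this
    exact this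
  refine ⟨w, ?_⟩
  have hw' : M *ᵥ w = r := hw
  rw [hw', ← hkr, hk0, zero_add]

lemma trace_eq_zero_of_range_le {n : Type*} [Fintype n] [DecidableEq n]
    (M P : Matrix n n ℂ)
    (h : LinearMap.range P.mulVecLin ≤ LinearMap.ker M.mulVecLin) :
    (P * M).trace = 0 := by
  have h2 : M * P = 0 := by
    ext i j
    have h3 : (M * P).mulVec (Pi.single j 1) = 0 := by
      rw [← mulVec_mulVec]
      exact h (LinearMap.mem_range_self P.mulVecLin (Pi.single j 1))
    have := congr_fun h3 i
    simpa using this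
  rw [trace_mul_comm, h2, trace_zero]

lemma trace_mul_outer {n : Type*} [Fintype n] (M : Matrix n n ℂ) (v : n → ℂ) :
    (M * Matrix.vecMulVec v (star v)).trace = star v ⬝ᵥ M.mulVec v := by
  rw [trace_mul_eq, quad_eq]
  refine Fintype.sum_congr _ _ fun p => ?_
  simp only [vecMulVec_apply, Pi.star_apply]
  ring

lemma trace_outer {n : Type*} [Fintype n] (v : n → ℂ) :
    (Matrix.vecMulVec v (star v)).trace = star v ⬝ᵥ v := by
  simp only [Matrix.trace, Matrix.diag, vecMulVec_apply, dotProduct, Pi.star_apply]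
  exact Finset.sum_congr rfl fun i _ => mul_comm _ _

lemma ofReal_re_of_nonneg {z : ℂ} (h : 0 ≤ z) : (z.re : ℂ) = z := by
  have him := (Complex.le_def.mp h).2
  exact Complex.ext (by simp) (by simp [← him])


lemma isCompact_sphere (n : ℕ) : IsCompact {e : Fin n → ℂ | star e ⬝ᵥ e = 1} := by
  have hcont : Continuous fun e : Fin n → ℂ => star e ⬝ᵥ e := by
    simp only [dotProduct, Pi.star_apply]
    exact continuous_finset_sum _ fun i _ => ((continuous_apply i).star).mul (continuous_apply i)
  apply Metric.isCompact_of_isClosed_isBounded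
  · exact isClosed_eq hcont continuous_const
  · rw [isBounded_iff_forall_norm_le]
    refine ⟨1, fun e he => ?_⟩
    have hsum : ∑ i, ‖e i‖ ^ 2 = 1 := by
      have h1 : ((∑ i, ‖e i‖ ^ 2 : ℝ) : ℂ) = 1 := by
        have he' : star e ⬝ᵥ e = 1 := he
        rw [← he']
        simp only [dotProduct, Pi.star_apply, RCLike.star_def, RCLike.conj_mul]
        push_cast
        rfl
      exact_mod_cast h1
    rw [pi_norm_le_iff_of_nonneg zero_le_one]
    intro i
    have h2 : ‖e i‖ ^ 2 ≤ 1 := by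
      rw [← hsum]
      exact Finset.single_le_sum (f := fun j => ‖e j‖ ^ 2) (fun j _ => sq_nonneg _)
        (Finset.mem_univ i)
    exact (pow_le_one_iff_of_nonneg (norm_nonneg _) two_ne_zero).mp h2

lemma star_dot_single {n : Type*} [Fintype n] [DecidableEq n] (i : n) :
    star (Pi.single i (1:ℂ)) ⬝ᵥ Pi.single i (1:ℂ) = 1 := by
  simp [dotProduct, Pi.single_apply, apply_ite]

lemma continuous_quadF (X : Matrix (Idx N) (Idx N) ℂ) :
    Continuous (fun t : (Fin 2 → ℂ) × (Fin 2 → ℂ) × (Fin N → ℂ) =>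
      (star (prodVec t.1 t.2.1 t.2.2) ⬝ᵥ X.mulVec (prodVec t.1 t.2.1 t.2.2)).re) := by
  have hv : ∀ x : Idx N, Continuous (fun t : (Fin 2 → ℂ) × (Fin 2 → ℂ) × (Fin N → ℂ) =>
      prodVec t.1 t.2.1 t.2.2 x) := fun x =>
    (((continuous_apply x.1).comp continuous_fst).mul
      ((continuous_apply x.2.1).comp (continuous_fst.comp continuous_snd))).mul
      ((continuous_apply x.2.2).comp (continuous_snd.comp continuous_snd))
  apply Complex.continuous_re.comp
  have hrw : (fun t : (Fin 2 → ℂ) × (Fin 2 → ℂ) × (Fin N → ℂ) =>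
      star (prodVec t.1 t.2.1 t.2.2) ⬝ᵥ X.mulVec (prodVec t.1 t.2.1 t.2.2))
      = fun t => ∑ p : Idx N × Idx N,
          star (prodVec t.1 t.2.1 t.2.2 p.1) * X p.1 p.2 * prodVec t.1 t.2.1 t.2.2 p.2 := by
    funext t; rw [quad_eq]
  rw [hrw]
  exact continuous_finset_sum _ fun p _ =>
    ((hv p.1).star.mul continuous_const).mul (hv p.2)

end EW

/-- The canonical entanglement witness `W = P + Q^{t_A} + R^{t_B} + S^{t_{AB}} - ε·𝟙`
associated with an edge state `δ` is nonnegative on all normalized separable states and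
strictly negative on `δ`. -/
theorem edge_state_witness (N : ℕ)
    (δ P Q R S : Matrix (Fin 2 × Fin 2 × Fin N) (Fin 2 × Fin 2 × Fin N) ℂ)
    (hδpos : δ.PosSemidef) (hδppt : IsPPT δ) (hδne : δ ≠ 0) (hedge : IsEdgeState δ)
    (hP : P.PosSemidef) (hQ : Q.PosSemidef) (hR : R.PosSemidef) (hS : S.PosSemidef)
    (hPr : LinearMap.range P.mulVecLin = LinearMap.ker δ.mulVecLin)
    (hQr : LinearMap.range Q.mulVecLin = LinearMap.ker (ptA δ).mulVecLin)
    (hRr : LinearMap.range R.mulVecLin = LinearMap.ker (ptB δ).mulVecLin)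
    (hSr : LinearMap.range S.mulVecLin = LinearMap.ker (ptAB δ).mulVecLin) :
    (∀ σ : Matrix (Fin 2 × Fin 2 × Fin N) (Fin 2 × Fin 2 × Fin N) ℂ,
      SeparableState σ → σ.trace = 1 →
      0 ≤ ((P + ptA Q + ptB R + ptAB S
            - ((sInf (epsSet P Q R S) : ℝ) : ℂ) • (1 : Matrix _ _ ℂ)) * σ).trace) ∧
    ((P + ptA Q + ptB R + ptAB S
        - ((sInf (epsSet P Q R S) : ℝ) : ℂ) • (1 : Matrix _ _ ℂ)) * δ).trace
      = -((sInf (epsSet P Q R S) : ℝ) : ℂ) * δ.trace ∧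
    ((P + ptA Q + ptB R + ptAB S
        - ((sInf (epsSet P Q R S) : ℝ) : ℂ) • (1 : Matrix _ _ ℂ)) * δ).trace < 0 := by
  classical
  have hN : N ≠ 0 := by
    rintro rfl
    exact hδne (by ext x _; exact x.2.2.elim0)
  set X := P + ptA Q + ptB R + ptAB S with hXdef
  set ε := sInf (epsSet P Q R S) with hεdef
  have hXquad : ∀ (e f : Fin 2 → ℂ) (g : Fin N → ℂ),
      0 ≤ star (prodVec e f g) ⬝ᵥ X.mulVec (prodVec e f g) := by
    intro e f g
    rw [hXdef, Matrix.add_mulVec, Matrix.add_mulVec, Matrix.add_mulVec,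
      dotProduct_add, dotProduct_add, dotProduct_add]
    refine add_nonneg (add_nonneg (add_nonneg (hP.dotProduct_mulVec_nonneg _) ?_) ?_) ?_
    · rw [EW.quad_ptA]; exact hQ.dotProduct_mulVec_nonneg _
    · rw [EW.quad_ptB]; exact hR.dotProduct_mulVec_nonneg _
    · rw [EW.quad_ptAB]; exact hS.dotProduct_mulVec_nonneg _
  have hmemle : ∀ r ∈ epsSet P Q R S, (0:ℝ) ≤ r := by
    rintro r ⟨e, f, g, he, hf, hg, hr⟩
    rw [← hXdef] at hr
    have h := hXquad e f g
    rw [← hr] at h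
    exact Complex.zero_le_real.mp h
  have hbdd : BddBelow (epsSet P Q R S) := ⟨0, hmemle⟩
  have hKc : IsCompact ({e : Fin 2 → ℂ | star e ⬝ᵥ e = 1} ×ˢ
      ({f : Fin 2 → ℂ | star f ⬝ᵥ f = 1} ×ˢ {g : Fin N → ℂ | star g ⬝ᵥ g = 1})) :=
    (EW.isCompact_sphere 2).prod ((EW.isCompact_sphere 2).prod (EW.isCompact_sphere N))
  have himg : epsSet P Q R S =
      (fun t : (Fin 2 → ℂ) × (Fin 2 → ℂ) × (Fin N → ℂ) =>
        (star (prodVec t.1 t.2.1 t.2.2) ⬝ᵥ X.mulVec (prodVec t.1 t.2.1 t.2.2)).re) ''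
        ({e : Fin 2 → ℂ | star e ⬝ᵥ e = 1} ×ˢ
          ({f : Fin 2 → ℂ | star f ⬝ᵥ f = 1} ×ˢ {g : Fin N → ℂ | star g ⬝ᵥ g = 1})) := by
    ext r
    constructor
    · rintro ⟨e, f, g, he, hf, hg, hr⟩
      rw [← hXdef] at hr
      refine ⟨(e, f, g), ⟨he, hf, hg⟩, ?_⟩
      simp only
      rw [← hr, Complex.ofReal_re]
    · rintro ⟨⟨e, f, g⟩, ⟨he, hf, hg⟩, rfl⟩
      refine ⟨e, f, g, he, hf, hg, ?_⟩
      rw [← hXdef]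
      exact EW.ofReal_re_of_nonneg (hXquad e f g)
  have hne : (epsSet P Q R S).Nonempty := by
    rw [himg]
    refine ⟨_, ⟨(Pi.single 0 1, Pi.single 0 1,
      Pi.single (⟨0, Nat.pos_of_ne_zero hN⟩ : Fin N) 1), ?_, rfl⟩⟩
    exact Set.mem_prod.mpr ⟨EW.star_dot_single _,
      Set.mem_prod.mpr ⟨EW.star_dot_single _, EW.star_dot_single _⟩⟩
  have hmem : ε ∈ epsSet P Q R S := by
    rw [hεdef, himg]
    exact (hKc.image (EW.continuous_quadF X)).sInf_mem (himg ▸ hne)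
  have hεnn : (0:ℝ) ≤ ε := hmemle ε hmem
  -- ε is positive, via the edge-state property
  have hεpos : (0:ℝ) < ε := by
    rcases hεnn.lt_or_eq with h | h
    · exact h
    exfalso
    obtain ⟨e₀, f₀, g₀, he₀, hf₀, hg₀, hq₀⟩ := hmem
    rw [← hXdef, ← h] at hq₀
    have hsum0 : star (prodVec e₀ f₀ g₀) ⬝ᵥ P.mulVec (prodVec e₀ f₀ g₀)
        + star (prodVec e₀ f₀ g₀) ⬝ᵥ (ptA Q).mulVec (prodVec e₀ f₀ g₀)
        + star (prodVec e₀ f₀ g₀) ⬝ᵥ (ptB R).mulVec (prodVec e₀ f₀ g₀)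
        + star (prodVec e₀ f₀ g₀) ⬝ᵥ (ptAB S).mulVec (prodVec e₀ f₀ g₀) = 0 := by
      rw [← dotProduct_add, ← dotProduct_add, ← dotProduct_add,
        ← Matrix.add_mulVec, ← Matrix.add_mulVec, ← Matrix.add_mulVec, ← hXdef, ← hq₀]
      simp
    have h1 : 0 ≤ star (prodVec e₀ f₀ g₀) ⬝ᵥ P.mulVec (prodVec e₀ f₀ g₀) := hP.dotProduct_mulVec_nonneg _
    have h2 : 0 ≤ star (prodVec e₀ f₀ g₀) ⬝ᵥ (ptA Q).mulVec (prodVec e₀ f₀ g₀) := by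
      rw [EW.quad_ptA]; exact hQ.dotProduct_mulVec_nonneg _
    have h3 : 0 ≤ star (prodVec e₀ f₀ g₀) ⬝ᵥ (ptB R).mulVec (prodVec e₀ f₀ g₀) := by
      rw [EW.quad_ptB]; exact hR.dotProduct_mulVec_nonneg _
    have h4 : 0 ≤ star (prodVec e₀ f₀ g₀) ⬝ᵥ (ptAB S).mulVec (prodVec e₀ f₀ g₀) := by
      rw [EW.quad_ptAB]; exact hS.dotProduct_mulVec_nonneg _
    obtain ⟨h123, h4z⟩ := (add_eq_zero_iff_of_nonneg
      (add_nonneg (add_nonneg h1 h2) h3) h4).mp hsum0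
    obtain ⟨h12, h3z⟩ := (add_eq_zero_iff_of_nonneg (add_nonneg h1 h2) h3).mp h123
    obtain ⟨h1z, h2z⟩ := (add_eq_zero_iff_of_nonneg h1 h2).mp h12
    rw [EW.quad_ptA] at h2z
    rw [EW.quad_ptB] at h3z
    rw [EW.quad_ptAB] at h4z
    have hPv := (hP.dotProduct_mulVec_zero_iff _).mp h1z
    have hQv := (hQ.dotProduct_mulVec_zero_iff _).mp h2z
    have hRv := (hR.dotProduct_mulVec_zero_iff _).mp h3z
    have hSv := (hS.dotProduct_mulVec_zero_iff _).mp h4z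
    apply hedge
    refine ⟨e₀, f₀, g₀, ?_, ?_, ?_, ?_, ?_, ?_, ?_⟩
    · intro h0; rw [h0] at he₀; simp at he₀
    · intro h0; rw [h0] at hf₀; simp at hf₀
    · intro h0; rw [h0] at hg₀; simp at hg₀
    · exact EW.mem_range_of_herm δ P hδpos.1 hP.1 hPr _ hPv
    · exact EW.mem_range_of_herm (ptA δ) Q hδppt.1.1 hQ.1 hQr _ hQv
    · exact EW.mem_range_of_herm (ptB δ) R hδppt.2.1.1 hR.1 hRr _ hRv
    · exact EW.mem_range_of_herm (ptAB δ) S hδppt.2.2.1 hS.1 hSr _ hSv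
  -- the key pointwise inequality on product vectors
  have hkey : ∀ (e f : Fin 2 → ℂ) (g : Fin N → ℂ),
      (ε:ℂ) * (star (prodVec e f g) ⬝ᵥ prodVec e f g)
        ≤ star (prodVec e f g) ⬝ᵥ X.mulVec (prodVec e f g) := by
    intro e f g
    by_cases he : e = 0
    · have hv0 : prodVec e f g = 0 := by subst he; funext x; simp [prodVec]
      rw [hv0]; simp
    by_cases hf : f = 0
    · have hv0 : prodVec e f g = 0 := by subst hf; funext x; simp [prodVec]
      rw [hv0]; simp
    by_cases hg : g = 0
    · have hv0 : prodVec e f g = 0 := by subst hg; funext x; simp [prodVec]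
      rw [hv0]; simp
    have hqpos : ∀ {m : Type} [inst : Fintype m] (u : m → ℂ), u ≠ 0 →
        ∃ a : ℝ, 0 < a ∧ (a:ℂ) = star u ⬝ᵥ u := by
      intro m inst u hu
      have hq : (0:ℂ) ≤ star u ⬝ᵥ u := by
        simp only [dotProduct, Pi.star_apply]
        exact Finset.sum_nonneg fun i _ => star_mul_self_nonneg _
      refine ⟨(star u ⬝ᵥ u).re, ?_, EW.ofReal_re_of_nonneg hq⟩
      rcases (Complex.le_def.mp hq).1.lt_or_eq with h | h
      · simpa using h
      exfalso
      apply hu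
      apply dotProduct_star_self_eq_zero.mp
      rw [← EW.ofReal_re_of_nonneg hq, ← h]
      simp
    obtain ⟨ae, hae, haee⟩ := hqpos e he
    obtain ⟨af, haf, haff⟩ := hqpos f hf
    obtain ⟨ag, hag, hagg⟩ := hqpos g hg
    set ce : ℝ := (Real.sqrt ae)⁻¹ with hcedef
    set cf : ℝ := (Real.sqrt af)⁻¹ with hcfdef
    set cg : ℝ := (Real.sqrt ag)⁻¹ with hcgdef
    have hce : ce ^ 2 * ae = 1 := by
      rw [hcedef, inv_pow, Real.sq_sqrt hae.le, inv_mul_cancel₀ hae.ne']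
    have hcf : cf ^ 2 * af = 1 := by
      rw [hcfdef, inv_pow, Real.sq_sqrt haf.le, inv_mul_cancel₀ haf.ne']
    have hcg : cg ^ 2 * ag = 1 := by
      rw [hcgdef, inv_pow, Real.sq_sqrt hag.le, inv_mul_cancel₀ hag.ne']
    have hunit : ∀ {m : Type} [inst : Fintype m] (u : m → ℂ) (a c : ℝ),
        (a:ℂ) = star u ⬝ᵥ u → c ^ 2 * a = 1 →
        star ((c:ℂ) • u) ⬝ᵥ ((c:ℂ) • u) = 1 := by
      intro m inst u a c hau hca
      rw [star_smul, smul_dotProduct, dotProduct_smul, ← hau]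
      rw [Complex.star_def, Complex.conj_ofReal, smul_eq_mul, smul_eq_mul]
      push_cast
      rw [show (c:ℂ) * ((c:ℂ) * (a:ℂ)) = ((c:ℂ)^2 * (a:ℂ)) by ring]
      rw [← Complex.ofReal_pow, ← Complex.ofReal_mul, hca, Complex.ofReal_one]
    have hvs : prodVec ((ce:ℂ) • e) ((cf:ℂ) • f) ((cg:ℂ) • g)
        = ((ce:ℂ) * cf * cg) • prodVec e f g := by
      funext x; simp only [prodVec, Pi.smul_apply, smul_eq_mul]; ring
    have hqv := hXquad e f g
    have hs : (((star (prodVec e f g) ⬝ᵥ X.mulVec (prodVec e f g)).re : ℝ) : ℂ)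
        = star (prodVec e f g) ⬝ᵥ X.mulVec (prodVec e f g) :=
      EW.ofReal_re_of_nonneg hqv
    set s : ℝ := (star (prodVec e f g) ⬝ᵥ X.mulVec (prodVec e f g)).re with hsdef
    have hmem2 : ce ^ 2 * cf ^ 2 * cg ^ 2 * s ∈ epsSet P Q R S := by
      refine ⟨(ce:ℂ) • e, (cf:ℂ) • f, (cg:ℂ) • g,
        hunit e ae ce haee hce, hunit f af cf haff hcf, hunit g ag cg hagg hcg, ?_⟩
      rw [← hXdef, hvs, Matrix.mulVec_smul, star_smul, smul_dotProduct, dotProduct_smul,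
        ← hs]
      simp only [Complex.star_def, _root_.map_mul, Complex.conj_ofReal, smul_eq_mul]
      push_cast
      ring
    have hle : ε ≤ ce ^ 2 * cf ^ 2 * cg ^ 2 * s := csInf_le hbdd hmem2
    have hdot : star (prodVec e f g) ⬝ᵥ prodVec e f g = ((ae * af * ag : ℝ) : ℂ) := by
      rw [EW.dot_prodVec, ← haee, ← haff, ← hagg]
      push_cast
      ring
    rw [hdot, ← hs, ← Complex.ofReal_mul, Complex.real_le_real]
    calc ε * (ae * af * ag) ≤ (ce ^ 2 * cf ^ 2 * cg ^ 2 * s) * (ae * af * ag) :=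
          mul_le_mul_of_nonneg_right hle (by positivity)
      _ = (ce ^ 2 * ae) * ((cf ^ 2 * af) * ((cg ^ 2 * ag) * s)) := by ring
      _ = s := by rw [hce, hcf, hcg]; ring
  -- trace of X * δ vanishes
  have hXδ : (X * δ).trace = 0 := by
    rw [hXdef, Matrix.add_mul, Matrix.add_mul, Matrix.add_mul,
      trace_add, trace_add, trace_add,
      EW.trace_ptA_mul, EW.trace_ptB_mul, EW.trace_ptAB_mul,
      EW.trace_eq_zero_of_range_le δ P hPr.le,
      EW.trace_eq_zero_of_range_le (ptA δ) Q hQr.le,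
      EW.trace_eq_zero_of_range_le (ptB δ) R hRr.le,
      EW.trace_eq_zero_of_range_le (ptAB δ) S hSr.le]
    simp
  have heq : ((X - ((ε:ℝ):ℂ) • (1 : Matrix _ _ ℂ)) * δ).trace = -((ε:ℝ):ℂ) * δ.trace := by
    rw [Matrix.sub_mul, trace_sub, Matrix.smul_mul, one_mul, trace_smul, hXδ,
      smul_eq_mul, zero_sub, neg_mul]
  -- trace of δ is positive
  have htrnn : ∀ i, 0 ≤ δ i i := by
    intro i
    have h := hδpos.dotProduct_mulVec_nonneg (Pi.single i 1)
    simpa [dotProduct, Pi.single_apply, apply_ite] using h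
  have htr0 : 0 ≤ δ.trace := by
    apply Finset.sum_nonneg
    intro i _
    exact htrnn i
  have htrne : δ.trace ≠ 0 := by
    intro h
    apply hδne
    have hdiag : ∀ i, δ i i = 0 := by
      have := (Finset.sum_eq_zero_iff_of_nonneg fun i _ => htrnn i).mp h
      intro i; exact this i (Finset.mem_univ i)
    ext i j
    have h1 : star (Pi.single j (1:ℂ)) ⬝ᵥ δ.mulVec (Pi.single j 1) = 0 := by
      simpa [dotProduct, Pi.single_apply, apply_ite] using hdiag j
    have h2 := (hδpos.dotProduct_mulVec_zero_iff _).mp h1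
    have h3 := congr_fun h2 i
    simpa using h3
  have htrpos : 0 < δ.trace := lt_of_le_of_ne htr0 (Ne.symm htrne)
  refine ⟨?_, heq, ?_⟩
  · intro σ hσ hσtr
    obtain ⟨k, p, ef, ff, gf, hp, rfl⟩ := hσ
    rw [Matrix.mul_sum, trace_sum]
    apply Finset.sum_nonneg
    intro i _
    rw [Matrix.mul_smul, trace_smul, smul_eq_mul]
    apply mul_nonneg (Complex.zero_le_real.mpr (hp i))
    have hWv : ((X - ((ε:ℝ):ℂ) • (1 : Matrix _ _ ℂ)) * outer (prodVec (ef i) (ff i) (gf i))).trace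
        = (star (prodVec (ef i) (ff i) (gf i)) ⬝ᵥ X.mulVec (prodVec (ef i) (ff i) (gf i)))
          - ((ε:ℝ):ℂ) * (star (prodVec (ef i) (ff i) (gf i)) ⬝ᵥ prodVec (ef i) (ff i) (gf i)) := by
      rw [Matrix.sub_mul, trace_sub, Matrix.smul_mul, one_mul, trace_smul, smul_eq_mul]
      rw [show outer (prodVec (ef i) (ff i) (gf i))
          = Matrix.vecMulVec (prodVec (ef i) (ff i) (gf i)) (star (prodVec (ef i) (ff i) (gf i)))
          from rfl]
      rw [EW.trace_mul_outer, EW.trace_outer]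
    rw [hWv, sub_nonneg]
    exact hkey (ef i) (ff i) (gf i)
  · rw [heq, neg_mul, neg_lt_zero]
    exact mul_pos (Complex.zero_lt_real.mpr hεpos) htrpos

end
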